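/- Let (p_m), (q_n) be positive sequences with partial sums P_m, Q_n strictly increasing to infinity, satisfying P_{m−1}/P_m → 1 and Q_{n−1}/Q_n → 1. Let (u_{mn}) be a double sequence of real numbers whose weighted means σ_{mn} = (1/(P_mQ_n)) Σ_{i=0}^m Σ_{j=0}^n p_i q_j u_{ij} are P-convergent to ℓ. If (u_{mn}) is slowly decreasing relative to (P_m), slowly decreasing relative to (Q_n), and slowly decreasing relative to (Q_n) in the strong sense, then (u_{mn}) is P-convergent to ℓ. -/

import Mathlib

open Filter

private lemma sum_Ico_eq_P (p : ℕ → ℝ) (P : ℕ → ℝ)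
    (hP : ∀ m : ℕ, P m = ∑ i ∈ Finset.range (m + 1), p i)
    {a b : ℕ} (h : a ≤ b) :
    ∑ i ∈ Finset.Ico (a + 1) (b + 1), p i = P b - P a := by
  rw [Finset.sum_Ico_eq_sub _ (by omega), hP, hP]

private lemma rect_eq (w : ℕ → ℕ → ℝ) {a b c d : ℕ} (hab : a ≤ b) (hcd : c ≤ d) :
    ∑ i ∈ Finset.Ico (a + 1) (b + 1), ∑ j ∈ Finset.Ico (c + 1) (d + 1), w i j
      = (∑ i ∈ Finset.range (b+1), ∑ j ∈ Finset.range (d+1), w i j)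
      - (∑ i ∈ Finset.range (b+1), ∑ j ∈ Finset.range (c+1), w i j)
      - (∑ i ∈ Finset.range (a+1), ∑ j ∈ Finset.range (d+1), w i j)
      + (∑ i ∈ Finset.range (a+1), ∑ j ∈ Finset.range (c+1), w i j) := by
  calc ∑ i ∈ Finset.Ico (a+1) (b+1), ∑ j ∈ Finset.Ico (c+1) (d+1), w i j
      = ∑ i ∈ Finset.Ico (a+1) (b+1),
          ((∑ j ∈ Finset.range (d+1), w i j) - ∑ j ∈ Finset.range (c+1), w i j) :=
        Finset.sum_congr rfl fun i _ => Finset.sum_Ico_eq_sub _ (by omega)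
    _ = (∑ i ∈ Finset.Ico (a+1) (b+1), ∑ j ∈ Finset.range (d+1), w i j)
        - ∑ i ∈ Finset.Ico (a+1) (b+1), ∑ j ∈ Finset.range (c+1), w i j :=
        Finset.sum_sub_distrib _ _
    _ = _ := by
        rw [Finset.sum_Ico_eq_sub _ (by omega : a+1 ≤ b+1),
            Finset.sum_Ico_eq_sub (fun i => ∑ j ∈ Finset.range (c+1), w i j)
              (by omega : a+1 ≤ b+1)]
        ring

private lemma rect_ge (p q : ℕ → ℝ) (u : ℕ → ℕ → ℝ) (K : ℝ) (A B : Finset ℕ)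
    (hp : ∀ i ∈ A, 0 ≤ p i) (hq : ∀ j ∈ B, 0 ≤ q j)
    (h : ∀ i ∈ A, ∀ j ∈ B, K ≤ u i j) :
    K * ((∑ i ∈ A, p i) * (∑ j ∈ B, q j)) ≤ ∑ i ∈ A, ∑ j ∈ B, p i * q j * u i j := by
  have e : K * ((∑ i ∈ A, p i) * (∑ j ∈ B, q j)) = ∑ i ∈ A, ∑ j ∈ B, p i * q j * K := by
    rw [Finset.sum_mul_sum, Finset.mul_sum]
    refine Finset.sum_congr rfl fun i _ => ?_
    rw [Finset.mul_sum]
    exact Finset.sum_congr rfl fun j _ => by ring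
  rw [e]
  refine Finset.sum_le_sum fun i hi => Finset.sum_le_sum fun j hj => ?_
  have h0 : 0 ≤ p i * q j := mul_nonneg (hp i hi) (hq j hj)
  nlinarith [h i hi j hj]

private lemma rect_le (p q : ℕ → ℝ) (u : ℕ → ℕ → ℝ) (K : ℝ) (A B : Finset ℕ)
    (hp : ∀ i ∈ A, 0 ≤ p i) (hq : ∀ j ∈ B, 0 ≤ q j)
    (h : ∀ i ∈ A, ∀ j ∈ B, u i j ≤ K) :
    ∑ i ∈ A, ∑ j ∈ B, p i * q j * u i j ≤ K * ((∑ i ∈ A, p i) * (∑ j ∈ B, q j)) := by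
  have e : K * ((∑ i ∈ A, p i) * (∑ j ∈ B, q j)) = ∑ i ∈ A, ∑ j ∈ B, p i * q j * K := by
    rw [Finset.sum_mul_sum, Finset.mul_sum]
    refine Finset.sum_congr rfl fun i _ => ?_
    rw [Finset.mul_sum]
    exact Finset.sum_congr rfl fun j _ => by ring
  rw [e]
  refine Finset.sum_le_sum fun i hi => Finset.sum_le_sum fun j hj => ?_
  have h0 : 0 ≤ p i * q j := mul_nonneg (hp i hi) (hq j hj)
  nlinarith [h i hi j hj]

private lemma corner (Pa Pb Qc Qd A B δ L s1 s2 s3 s4 : ℝ)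
    (h0a : 0 ≤ Pa) (hab : Pa ≤ Pb) (hA : Pb ≤ A)
    (h0c : 0 ≤ Qc) (hcd : Qc ≤ Qd) (hB : Qd ≤ B) (hδ : 0 ≤ δ)
    (e1 : |s1 - L| ≤ δ) (e2 : |s2 - L| ≤ δ) (e3 : |s3 - L| ≤ δ) (e4 : |s4 - L| ≤ δ) :
    |s1 * (Pb * Qd) - s2 * (Pb * Qc) - s3 * (Pa * Qd) + s4 * (Pa * Qc)
      - L * ((Pb - Pa) * (Qd - Qc))| ≤ 4 * (A * B * δ) := by
  have pb0 : 0 ≤ Pb := h0a.trans hab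
  have qd0 : 0 ≤ Qd := h0c.trans hcd
  have A0 : 0 ≤ A := pb0.trans hA
  have B0 : 0 ≤ B := qd0.trans hB
  have t1 : |(s1 - L) * (Pb * Qd)| ≤ A * B * δ := by
    rw [abs_mul, abs_of_nonneg (mul_nonneg pb0 qd0)]
    calc |s1 - L| * (Pb * Qd) ≤ δ * (A * B) :=
          mul_le_mul e1 (mul_le_mul hA hB qd0 A0) (mul_nonneg pb0 qd0) hδ
      _ = A * B * δ := by ring
  have t2 : |(s2 - L) * (Pb * Qc)| ≤ A * B * δ := by
    rw [abs_mul, abs_of_nonneg (mul_nonneg pb0 h0c)]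
    calc |s2 - L| * (Pb * Qc) ≤ δ * (A * B) :=
          mul_le_mul e2 (mul_le_mul hA (hcd.trans hB) h0c A0) (mul_nonneg pb0 h0c) hδ
      _ = A * B * δ := by ring
  have t3 : |(s3 - L) * (Pa * Qd)| ≤ A * B * δ := by
    rw [abs_mul, abs_of_nonneg (mul_nonneg h0a qd0)]
    calc |s3 - L| * (Pa * Qd) ≤ δ * (A * B) :=
          mul_le_mul e3 (mul_le_mul (hab.trans hA) hB qd0 A0) (mul_nonneg h0a qd0) hδ
      _ = A * B * δ := by ring
  have t4 : |(s4 - L) * (Pa * Qc)| ≤ A * B * δ := by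
    rw [abs_mul, abs_of_nonneg (mul_nonneg h0a h0c)]
    calc |s4 - L| * (Pa * Qc) ≤ δ * (A * B) :=
          mul_le_mul e4 (mul_le_mul (hab.trans hA) (hcd.trans hB) h0c A0) (mul_nonneg h0a h0c) hδ
      _ = A * B * δ := by ring
  have key : s1 * (Pb * Qd) - s2 * (Pb * Qc) - s3 * (Pa * Qd) + s4 * (Pa * Qc)
      - L * ((Pb - Pa) * (Qd - Qc))
      = (s1 - L) * (Pb * Qd) - (s2 - L) * (Pb * Qc) - (s3 - L) * (Pa * Qd)
        + (s4 - L) * (Pa * Qc) := by ring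
  rw [key]
  obtain ⟨a1, b1⟩ := abs_le.mp t1
  obtain ⟨a2, b2⟩ := abs_le.mp t2
  obtain ⟨a3, b3⟩ := abs_le.mp t3
  obtain ⟨a4, b4⟩ := abs_le.mp t4
  rw [abs_le]
  constructor <;> linarith

set_option maxHeartbeats 1000000 in
/-- Tauberian theorem: if the weighted means of a real double sequence are Pringsheim
convergent to ℓ and the sequence is slowly decreasing relative to (P_m), relative to (Q_n),
and relative to (Q_n) in the strong sense, then the sequence is Pringsheim convergent to ℓ. -/
theorem stmt10 (u : ℕ → ℕ → ℝ) (p q : ℕ → ℝ)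
    (hp : ∀ m, 0 < p m) (hq : ∀ n, 0 < q n)
    (P Q : ℕ → ℝ)
    (hP : ∀ m : ℕ, P m = ∑ i ∈ Finset.range (m + 1), p i)
    (hQ : ∀ n : ℕ, Q n = ∑ j ∈ Finset.range (n + 1), q j)
    (hPtop : Tendsto P atTop atTop) (hQtop : Tendsto Q atTop atTop)
    (hPratio : Tendsto (fun m : ℕ => P (m - 1) / P m) atTop (nhds 1))
    (hQratio : Tendsto (fun n : ℕ => Q (n - 1) / Q n) atTop (nhds 1))
    (σ : ℕ → ℕ → ℝ)
    (hσ : ∀ m n : ℕ, σ m n =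
      (∑ i ∈ Finset.range (m + 1), ∑ j ∈ Finset.range (n + 1), p i * q j * u i j)
        / (P m * Q n))
    (ℓ : ℝ)
    (hsum : ∀ ε > (0 : ℝ), ∃ n₀ : ℕ, ∀ m n : ℕ, n₀ ≤ m → n₀ ≤ n → |σ m n - ℓ| < ε)
    (hSDP : ∀ ε > (0 : ℝ), ∃ n₀ : ℕ, ∃ l > (1 : ℝ),
      ∀ m n i : ℕ, n₀ ≤ m → n₀ ≤ n → m ≤ i → P i ≤ l * P m → u i n - u m n ≥ -ε)
    (hSDQ : ∀ ε > (0 : ℝ), ∃ n₀ : ℕ, ∃ k > (1 : ℝ),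
      ∀ m n j : ℕ, n₀ ≤ m → n₀ ≤ n → n ≤ j → Q j ≤ k * Q n → u m j - u m n ≥ -ε)
    (hSDQstrong : ∀ ε > (0 : ℝ), ∃ n₀ : ℕ, ∃ l > (1 : ℝ), ∃ k > (1 : ℝ),
      ∀ m n i j : ℕ, n₀ ≤ m → n₀ ≤ n → m ≤ i → n ≤ j →
        P i ≤ l * P m → Q j ≤ k * Q n → u i j - u i n ≥ -ε) :
    ∀ ε > (0 : ℝ), ∃ n₀ : ℕ, ∀ m n : ℕ, n₀ ≤ m → n₀ ≤ n → |u m n - ℓ| < ε := by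
  classical
  -- positivity and monotonicity of P, Q
  have hPpos : ∀ m, 0 < P m := fun m => by
    rw [hP]; exact Finset.sum_pos (fun i _ => hp i) Finset.nonempty_range_add_one
  have hQpos : ∀ n, 0 < Q n := fun n => by
    rw [hQ]; exact Finset.sum_pos (fun j _ => hq j) Finset.nonempty_range_add_one
  have hPmono : Monotone P := (strictMono_nat_of_lt_succ fun m => by
    have h : P (m+1) = P m + p (m+1) := by
      rw [hP (m+1), hP m, Finset.sum_range_succ]
    linarith [hp (m+1)]).monotone
  have hQmono : Monotone Q := (strictMono_nat_of_lt_succ fun n => by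
    have h : Q (n+1) = Q n + q (n+1) := by
      rw [hQ (n+1), hQ n, Finset.sum_range_succ]
    linarith [hq (n+1)]).monotone
  -- the σ-identity
  have hSid : ∀ x y : ℕ, (∑ i ∈ Finset.range (x+1), ∑ j ∈ Finset.range (y+1),
      p i * q j * u i j) = σ x y * (P x * Q y) := by
    intro x y
    have h := hσ x y
    have hx : P x ≠ 0 := ne_of_gt (hPpos x)
    have hy : Q y ≠ 0 := ne_of_gt (hQpos y)
    field_simp at h
    linarith
  intro ε hε
  obtain ⟨n₁, l₁, hl₁, hP1⟩ := hSDP (ε/8) (by linarith)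
  obtain ⟨n₂, k₂, hk₂, hQ1⟩ := hSDQ (ε/8) (by linarith)
  obtain ⟨n₃, l₃, hl₃, k₃, hk₃, hS1⟩ := hSDQstrong (ε/8) (by linarith)
  obtain ⟨l, k, hl, hk, hll₁, hll₃, hkk₂, hkk₃⟩ :
      ∃ l k : ℝ, 1 < l ∧ 1 < k ∧ l ≤ l₁ ∧ l ≤ l₃ ∧ k ≤ k₂ ∧ k ≤ k₃ :=
    ⟨min l₁ l₃, min k₂ k₃, lt_min hl₁ hl₃, lt_min hk₂ hk₃,
      min_le_left _ _, min_le_right _ _, min_le_left _ _, min_le_right _ _⟩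
  obtain ⟨μ, hμ1, hμsq⟩ : ∃ μ : ℝ, 1 < μ ∧ μ * μ = l :=
    ⟨Real.sqrt l, by
      rw [show (1:ℝ) = Real.sqrt 1 from Real.sqrt_one.symm]
      exact Real.sqrt_lt_sqrt (by norm_num) hl, Real.mul_self_sqrt (by linarith)⟩
  obtain ⟨ν, hν1, hνsq⟩ : ∃ ν : ℝ, 1 < ν ∧ ν * ν = k :=
    ⟨Real.sqrt k, by
      rw [show (1:ℝ) = Real.sqrt 1 from Real.sqrt_one.symm]
      exact Real.sqrt_lt_sqrt (by norm_num) hk, Real.mul_self_sqrt (by linarith)⟩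
  have hμl : μ < l := by nlinarith
  have hνk : ν < k := by nlinarith
  have hμ0 : (0:ℝ) < μ := by linarith
  have hν0 : (0:ℝ) < ν := by linarith
  have hl0 : (0:ℝ) < l := by linarith
  have hk0 : (0:ℝ) < k := by linarith
  have hinvl : 1/l < 1 := by rw [div_lt_one hl0]; exact hl
  have hinvk : 1/k < 1 := by rw [div_lt_one hk0]; exact hk
  -- the precision for the means
  obtain ⟨δ, hδpos, hδ1, hδ2⟩ : ∃ δ : ℝ, 0 < δ ∧
      δ * (16*l*k) ≤ (μ-1)*(ν-1)*ε ∧ δ * 16 ≤ (1-1/l)*(1-1/k)*ε := by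
    refine ⟨min ((μ-1)*(ν-1)*ε/(16*l*k)) ((1-1/l)*(1-1/k)*ε/16), ?_, ?_, ?_⟩
    · apply lt_min
      · exact div_pos (mul_pos (mul_pos (by linarith) (by linarith)) hε)
          (by positivity)
      · exact div_pos (mul_pos (mul_pos (by linarith) (by linarith)) hε)
          (by norm_num)
    · have h := min_le_left ((μ-1)*(ν-1)*ε/(16*l*k)) ((1-1/l)*(1-1/k)*ε/16)
      rw [le_div_iff₀ (by positivity)] at h
      exact h
    · have h := min_le_right ((μ-1)*(ν-1)*ε/(16*l*k)) ((1-1/l)*(1-1/k)*ε/16)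
      rw [le_div_iff₀ (by norm_num : (0:ℝ) < 16)] at h
      exact h
  obtain ⟨Nσ, hNσ⟩ := hsum δ hδpos
  -- eventual ratio bounds
  have hPr' : Tendsto (fun m : ℕ => P m / P (m+1)) atTop (nhds 1) := by
    have := hPratio.comp (tendsto_add_atTop_nat 1)
    simpa [Function.comp_def] using this
  have hQr' : Tendsto (fun n : ℕ => Q n / Q (n+1)) atTop (nhds 1) := by
    have := hQratio.comp (tendsto_add_atTop_nat 1)
    simpa [Function.comp_def] using this
  have hμinv : 1/μ < 1 := by rw [div_lt_one hμ0]; exact hμ1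
  have hνinv : 1/ν < 1 := by rw [div_lt_one hν0]; exact hν1
  obtain ⟨N₄, hN₄⟩ := eventually_atTop.mp (hPr'.eventually (eventually_gt_nhds hμinv))
  obtain ⟨NQ₄, hNQ₄⟩ := eventually_atTop.mp (hQr'.eventually (eventually_gt_nhds hνinv))
  have hN₄' : ∀ i, N₄ ≤ i → P (i+1) ≤ μ * P i := by
    intro i hi
    have h := hN₄ i hi
    rw [div_lt_div_iff₀ hμ0 (hPpos (i+1))] at h
    nlinarith
  have hNQ₄' : ∀ j, NQ₄ ≤ j → Q (j+1) ≤ ν * Q j := by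
    intro j hj
    have h := hNQ₄ j hj
    rw [div_lt_div_iff₀ hν0 (hQpos (j+1))] at h
    nlinarith
  obtain ⟨K, hKσ, hK₁, hK₂, hK₃⟩ : ∃ K : ℕ, Nσ ≤ K ∧ n₁ ≤ K ∧ n₂ ≤ K ∧ n₃ ≤ K :=
    ⟨Nσ + n₁ + n₂ + n₃, by omega, by omega, by omega, by omega⟩
  obtain ⟨MP, hMP⟩ := eventually_atTop.mp (hPtop.eventually_gt_atTop (l * P K))
  obtain ⟨MQ, hMQ⟩ := eventually_atTop.mp (hQtop.eventually_gt_atTop (k * Q K))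
  refine ⟨K + N₄ + NQ₄ + MP + MQ, fun m n hm hn => ?_⟩
  -- ===================== upper windows =====================
  have hexb : ∃ i, l * P m < P i := (hPtop.eventually_gt_atTop (l * P m)).exists
  have hexd : ∃ j, k * Q n < Q j := (hQtop.eventually_gt_atTop (k * Q n)).exists
  obtain ⟨fb, hfb, hfbmin⟩ : ∃ fb : ℕ, l * P m < P fb ∧ ∀ i < fb, P i ≤ l * P m :=
    ⟨Nat.find hexb, Nat.find_spec hexb, fun i h => not_lt.mp (Nat.find_min hexb h)⟩
  obtain ⟨fd, hfd, hfdmin⟩ : ∃ fd : ℕ, k * Q n < Q fd ∧ ∀ j < fd, Q j ≤ k * Q n :=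
    ⟨Nat.find hexd, Nat.find_spec hexd, fun j h => not_lt.mp (Nat.find_min hexd h)⟩
  have hmb : m + 1 < fb := by
    by_contra hcon
    push_neg at hcon
    have h1 : P fb ≤ P (m+1) := hPmono hcon
    have h2 : P (m+1) ≤ μ * P m := hN₄' m (by omega)
    nlinarith [hPpos m]
  have hnd : n + 1 < fd := by
    by_contra hcon
    push_neg at hcon
    have h1 : Q fd ≤ Q (n+1) := hQmono hcon
    have h2 : Q (n+1) ≤ ν * Q n := hNQ₄' n (by omega)
    nlinarith [hQpos n]
  obtain ⟨b, hb_def⟩ : ∃ b : ℕ, b = fb - 1 := ⟨fb - 1, rfl⟩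
  obtain ⟨d, hd_def⟩ : ∃ d : ℕ, d = fd - 1 := ⟨fd - 1, rfl⟩
  have hmb' : m + 1 ≤ b := by omega
  have hnd' : n + 1 ≤ d := by omega
  have hble : P b ≤ l * P m := hfbmin b (by omega)
  have hdle : Q d ≤ k * Q n := hfdmin d (by omega)
  have hbgt : l * P m < P (b+1) := by rw [show b + 1 = fb by omega]; exact hfb
  have hdgt : k * Q n < Q (d+1) := by rw [show d + 1 = fd by omega]; exact hfd
  have hbmu : μ * P m ≤ P b := by
    have h2 : P (b+1) ≤ μ * P b := hN₄' b (by omega)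
    nlinarith [hPpos m, hPpos b]
  have hdnu : ν * Q n ≤ Q d := by
    have h2 : Q (d+1) ≤ ν * Q d := hNQ₄' d (by omega)
    nlinarith [hQpos n, hQpos d]
  -- pointwise lower bound on the rectangle
  have key1 : ∀ i ∈ Finset.Ico (m+1) (b+1), ∀ j ∈ Finset.Ico (n+1) (d+1),
      u m n - ε/4 ≤ u i j := by
    intro i hi j hj
    rw [Finset.mem_Ico] at hi hj
    have hPi : P i ≤ l * P m := le_trans (hPmono (by omega : i ≤ b)) hble
    have hQj : Q j ≤ k * Q n := le_trans (hQmono (by omega : j ≤ d)) hdle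
    have h1 : u i n - u m n ≥ -(ε/8) := by
      refine hP1 m n i (by omega) (by omega) (by omega) ?_
      calc P i ≤ l * P m := hPi
        _ ≤ l₁ * P m := mul_le_mul_of_nonneg_right hll₁ (hPpos m).le
    have h2 : u i j - u i n ≥ -(ε/8) := by
      refine hS1 m n i j (by omega) (by omega) (by omega) (by omega) ?_ ?_
      · calc P i ≤ l * P m := hPi
          _ ≤ l₃ * P m := mul_le_mul_of_nonneg_right hll₃ (hPpos m).le
      · calc Q j ≤ k * Q n := hQj
          _ ≤ k₃ * Q n := mul_le_mul_of_nonneg_right hkk₃ (hQpos n).le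
    linarith
  have hRge := rect_ge p q u (u m n - ε/4) (Finset.Ico (m+1) (b+1)) (Finset.Ico (n+1) (d+1))
    (fun i _ => (hp i).le) (fun j _ => (hq j).le) key1
  rw [sum_Ico_eq_P p P hP (by omega : m ≤ b), sum_Ico_eq_P q Q hQ (by omega : n ≤ d)] at hRge
  have hReq := rect_eq (fun i j => p i * q j * u i j) (by omega : m ≤ b) (by omega : n ≤ d)
  rw [hSid b d, hSid b n, hSid m d, hSid m n] at hReq
  have hC := corner (P m) (P b) (Q n) (Q d) (l * P m) (k * Q n) δ ℓ
    (σ b d) (σ b n) (σ m d) (σ m n)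
    (hPpos m).le (hPmono (by omega)) hble (hQpos n).le (hQmono (by omega)) hdle hδpos.le
    (hNσ b d (by omega) (by omega)).le (hNσ b n (by omega) (by omega)).le
    (hNσ m d (by omega) (by omega)).le (hNσ m n (by omega) (by omega)).le
  rw [← hReq] at hC
  obtain ⟨hClo, hChi⟩ := abs_le.mp hC
  -- numeric bound
  have hPQ : 0 < P m * Q n := mul_pos (hPpos m) (hQpos n)
  have hnum1 : 4 * ((l * P m) * (k * Q n) * δ) ≤ ε/4 * (((μ-1) * P m) * ((ν-1) * Q n)) := by
    have h := mul_le_mul_of_nonneg_right hδ1 hPQ.le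
    linarith only [h]
  have hWW : ((μ-1) * P m) * ((ν-1) * Q n) ≤ (P b - P m) * (Q d - Q n) := by
    have h1 : (μ-1) * P m ≤ P b - P m := by linarith only [hbmu]
    have h2 : (ν-1) * Q n ≤ Q d - Q n := by linarith only [hdnu]
    have h20 : 0 ≤ (ν-1) * Q n :=
      mul_nonneg (by linarith only [hν1]) (hQpos n).le
    have h10 : 0 ≤ (μ-1) * P m :=
      mul_nonneg (by linarith only [hμ1]) (hPpos m).le
    exact mul_le_mul h1 h2 h20 (by linarith only [h1, h10])
  have hWpos : 0 < (P b - P m) * (Q d - Q n) := by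
    have h10 : 0 < (μ-1) * P m := mul_pos (by linarith only [hμ1]) (hPpos m)
    have h20 : 0 < (ν-1) * Q n := mul_pos (by linarith only [hν1]) (hQpos n)
    exact lt_of_lt_of_le (mul_pos h10 h20) hWW
  have hεWW : ε/4 * (((μ-1) * P m) * ((ν-1) * Q n)) ≤ ε/4 * ((P b - P m) * (Q d - Q n)) :=
    mul_le_mul_of_nonneg_left hWW (by linarith only [hε])
  have hup : u m n - ℓ ≤ ε/2 := by
    have hprod : (u m n - ℓ - ε/2) * ((P b - P m) * (Q d - Q n)) ≤ 0 := by
      linarith only [hRge, hChi, hnum1, hεWW]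
    by_contra hcon
    push_neg at hcon
    have hmp := mul_pos (show 0 < u m n - ℓ - ε/2 by linarith only [hcon]) hWpos
    linarith only [hmp, hprod]
  -- ===================== lower windows =====================
  have hexs : ∃ i, P m ≤ l * P i := ⟨m, le_mul_of_one_le_left (hPpos m).le hl.le⟩
  have hext : ∃ j, Q n ≤ k * Q j := ⟨n, le_mul_of_one_le_left (hQpos n).le hk.le⟩
  obtain ⟨s, hss, hsm', hsmin⟩ : ∃ s : ℕ, P m ≤ l * P s ∧ s ≤ m ∧
      ∀ i < s, l * P i < P m :=
    ⟨Nat.find hexs, Nat.find_spec hexs,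
      Nat.find_min' hexs (le_mul_of_one_le_left (hPpos m).le hl.le),
      fun i h => not_le.mp (Nat.find_min hexs h)⟩
  obtain ⟨t, hts, htn', htmin⟩ : ∃ t : ℕ, Q n ≤ k * Q t ∧ t ≤ n ∧
      ∀ j < t, k * Q j < Q n :=
    ⟨Nat.find hext, Nat.find_spec hext,
      Nat.find_min' hext (le_mul_of_one_le_left (hQpos n).le hk.le),
      fun j h => not_le.mp (Nat.find_min hext h)⟩
  have hsK : K + 1 ≤ s := by
    by_contra hcon
    push_neg at hcon
    have h2 : P s ≤ P K := hPmono (by omega)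
    have h3 : l * P K < P m := hMP m (by omega)
    have h4 : l * P s ≤ l * P K :=
      mul_le_mul_of_nonneg_left h2 (by linarith only [hl])
    linarith only [hss, h4, h3]
  have htK : K + 1 ≤ t := by
    by_contra hcon
    push_neg at hcon
    have h2 : Q t ≤ Q K := hQmono (by omega)
    have h3 : k * Q K < Q n := hMQ n (by omega)
    have h4 : k * Q t ≤ k * Q K :=
      mul_le_mul_of_nonneg_left h2 (by linarith only [hk])
    linarith only [hts, h4, h3]
  have hsa : l * P (s-1) < P m := hsmin (s-1) (by omega)
  have hta : k * Q (t-1) < Q n := htmin (t-1) (by omega)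
  have hslow : ∀ i, s ≤ i → P m ≤ l * P i := fun i hi =>
    le_trans hss (mul_le_mul_of_nonneg_left (hPmono hi) (by linarith only [hl]))
  have htlow : ∀ j, t ≤ j → Q n ≤ k * Q j := fun j hj =>
    le_trans hts (mul_le_mul_of_nonneg_left (hQmono hj) (by linarith only [hk]))
  have key2 : ∀ i ∈ Finset.Ico ((s-1)+1) (m+1), ∀ j ∈ Finset.Ico ((t-1)+1) (n+1),
      u i j ≤ u m n + ε/4 := by
    intro i hi j hj
    rw [Finset.mem_Ico] at hi hj
    have hi' : s ≤ i := by omega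
    have hj' : t ≤ j := by omega
    have h1 : u m n - u i n ≥ -(ε/8) := by
      refine hP1 i n m (by omega) (by omega) (by omega) ?_
      calc P m ≤ l * P i := hslow i hi'
        _ ≤ l₁ * P i := mul_le_mul_of_nonneg_right hll₁ (hPpos i).le
    have h2 : u i n - u i j ≥ -(ε/8) := by
      refine hQ1 i j n (by omega) (by omega) (by omega) ?_
      calc Q n ≤ k * Q j := htlow j hj'
        _ ≤ k₂ * Q j := mul_le_mul_of_nonneg_right hkk₂ (hQpos j).le
    linarith
  have hRle := rect_le p q u (u m n + ε/4) (Finset.Ico ((s-1)+1) (m+1))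
    (Finset.Ico ((t-1)+1) (n+1)) (fun i _ => (hp i).le) (fun j _ => (hq j).le) key2
  rw [sum_Ico_eq_P p P hP (by omega : s-1 ≤ m), sum_Ico_eq_P q Q hQ (by omega : t-1 ≤ n)] at hRle
  have hReq2 := rect_eq (fun i j => p i * q j * u i j) (by omega : s-1 ≤ m) (by omega : t-1 ≤ n)
  rw [hSid m n, hSid m (t-1), hSid (s-1) n, hSid (s-1) (t-1)] at hReq2
  have hC2 := corner (P (s-1)) (P m) (Q (t-1)) (Q n) (P m) (Q n) δ ℓ
    (σ m n) (σ m (t-1)) (σ (s-1) n) (σ (s-1) (t-1))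
    (hPpos (s-1)).le (hPmono (by omega)) le_rfl
    (hQpos (t-1)).le (hQmono (by omega)) le_rfl hδpos.le
    (hNσ m n (by omega) (by omega)).le (hNσ m (t-1) (by omega) (by omega)).le
    (hNσ (s-1) n (by omega) (by omega)).le (hNσ (s-1) (t-1) (by omega) (by omega)).le
  rw [← hReq2] at hC2
  obtain ⟨hC2lo, hC2hi⟩ := abs_le.mp hC2
  have hnum2 : 4 * ((P m) * (Q n) * δ) ≤ ε/4 * (((1-1/l) * P m) * ((1-1/k) * Q n)) := by
    have h := mul_le_mul_of_nonneg_right hδ2 hPQ.le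
    linarith only [h]
  have hW1' : (1-1/l) * P m ≤ P m - P (s-1) := by
    have hps : P (s-1) ≤ P m / l := by
      rw [le_div_iff₀ hl0]; linarith only [hsa]
    have he : (1-1/l) * P m = P m - P m / l := by ring
    linarith only [hps, he]
  have hW2' : (1-1/k) * Q n ≤ Q n - Q (t-1) := by
    have hqt : Q (t-1) ≤ Q n / k := by
      rw [le_div_iff₀ hk0]; linarith only [hta]
    have he : (1-1/k) * Q n = Q n - Q n / k := by ring
    linarith only [hqt, he]
  have hinvl0 : 0 < 1 - 1/l := by linarith only [hinvl]
  have hinvk0 : 0 < 1 - 1/k := by linarith only [hinvk]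
  have hWW2 : ((1-1/l) * P m) * ((1-1/k) * Q n) ≤ (P m - P (s-1)) * (Q n - Q (t-1)) := by
    have h20 : 0 ≤ (1-1/k) * Q n := mul_nonneg hinvk0.le (hQpos n).le
    have h10 : 0 ≤ (1-1/l) * P m := mul_nonneg hinvl0.le (hPpos m).le
    exact mul_le_mul hW1' hW2' h20 (by linarith only [hW1', h10])
  have hW2pos : 0 < (P m - P (s-1)) * (Q n - Q (t-1)) := by
    have h10 : 0 < (1-1/l) * P m := mul_pos hinvl0 (hPpos m)
    have h20 : 0 < (1-1/k) * Q n := mul_pos hinvk0 (hQpos n)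
    exact lt_of_lt_of_le (mul_pos h10 h20) hWW2
  have hεWW2 : ε/4 * (((1-1/l) * P m) * ((1-1/k) * Q n))
      ≤ ε/4 * ((P m - P (s-1)) * (Q n - Q (t-1))) :=
    mul_le_mul_of_nonneg_left hWW2 (by linarith only [hε])
  have hlow : ℓ - u m n ≤ ε/2 := by
    have hprod : (ℓ - u m n - ε/2) * ((P m - P (s-1)) * (Q n - Q (t-1))) ≤ 0 := by
      linarith only [hRle, hC2lo, hnum2, hεWW2]
    by_contra hcon
    push_neg at hcon
    have hmp := mul_pos (show 0 < ℓ - u m n - ε/2 by linarith only [hcon]) hW2pos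
    linarith only [hmp, hprod]
  rw [abs_lt]
  constructor <;> linarith only [hup, hlow, hε]
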